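/- arXiv:1012.5793 — 2 statements merged into one kernel-verified Lean document; each statement's English description precedes it below -/
import Mathlib

section
/- Let G be a 4-connected graph not containing K₄⁻ as a subgraph, and let H be a minimal fat 4-hammock of G. Then H is 2-connected. -/
open SimpleGraph

variable {V : Type*}

/-- `K₄⁻` (two triangles sharing the edge `ab`; the edge `cd` may be absent)
occurs as a subgraph of `G`. -/
def containsK4minus (G : SimpleGraph V) : Prop :=
  ∃ a b c d : V, a ≠ b ∧ a ≠ c ∧ a ≠ d ∧ b ≠ c ∧ b ≠ d ∧ c ≠ d ∧
    G.Adj a b ∧ G.Adj a c ∧ G.Adj a d ∧ G.Adj b c ∧ G.Adj b d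

/-- `G` contains a subdivision of `K₅`: five branch vertices joined by
pairwise internally disjoint paths. -/
def containsK5Subdivision (G : SimpleGraph V) : Prop :=
  ∃ (b : Fin 5 → V) (P : ∀ i j : Fin 5, G.Walk (b i) (b j)),
    Function.Injective b ∧
    (∀ i j, i ≠ j → (P i j).IsPath) ∧
    (∀ i j, i ≠ j → ∀ k, b k ∈ (P i j).support → k = i ∨ k = j) ∧
    (∀ i j i' j', i < j → i' < j' → (i, j) ≠ (i', j') →
      ∀ x, x ∈ (P i j).support → x ∈ (P i' j').support → x = b i ∨ x = b j)

/-- `G` has an `H`-minor (branch sets are connected, disjoint, joined by edges). -/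
def HasMinor {W : Type*} (G : SimpleGraph V) (H : SimpleGraph W) : Prop :=
  ∃ f : W → Set V,
    (∀ w, (G.induce (f w)).Connected) ∧
    (∀ w₁ w₂, w₁ ≠ w₂ → Disjoint (f w₁) (f w₂)) ∧
    (∀ w₁ w₂, H.Adj w₁ w₂ → ∃ x ∈ f w₁, ∃ y ∈ f w₂, G.Adj x y)

/-- Planarity, via Wagner's theorem: no `K₅` and no `K₃,₃` minor. -/
def IsPlanar (G : SimpleGraph V) : Prop :=
  ¬ HasMinor G (completeGraph (Fin 5)) ∧
  ¬ HasMinor G (completeBipartiteGraph (Fin 3) (Fin 3))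

/-- `G` is `k`-connected: more than `k` vertices, and removing fewer than `k`
vertices leaves a connected graph. -/
def IsKConnected (k : ℕ) (G : SimpleGraph V) : Prop :=
  k < (Set.univ : Set V).ncard ∧
  ∀ S : Set V, S.Finite → S.ncard < k → (G.induce Sᶜ).Connected

/-- Boundary of a subgraph `H` of `G`: vertices of `H` incident with an edge
of `G` not in `H`. -/
def bnd (G : SimpleGraph V) (H : G.Subgraph) : Set V :=
  {v | v ∈ H.verts ∧ ∃ w, G.Adj v w ∧ ¬ H.Adj v w}

/-- A `k`-hammock: connected subgraph with boundary of size `k`. -/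
def IsHammock (G : SimpleGraph V) (k : ℕ) (H : G.Subgraph) : Prop :=
  H.Connected ∧ (bnd G H).ncard = k

def TrivialHammock (G : SimpleGraph V) (H : G.Subgraph) : Prop :=
  H.verts = bnd G H

def DegenerateHammock (G : SimpleGraph V) (H : G.Subgraph) : Prop :=
  H.verts.ncard = (bnd G H).ncard + 1

def FatHammock (G : SimpleGraph V) (H : G.Subgraph) : Prop :=
  (bnd G H).ncard + 2 ≤ H.verts.ncard

/-- A `4`-hammock is minimal if all its proper `4`-hammocks are trivial or degenerate. -/
def Minimal4Hammock (G : SimpleGraph V) (H : G.Subgraph) : Prop :=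
  IsHammock G 4 H ∧
  ∀ H' : G.Subgraph, H' ≤ H → H' ≠ H → IsHammock G 4 H' →
    TrivialHammock G H' ∨ DegenerateHammock G H'

def MinimalFat4Hammock (G : SimpleGraph V) (H : G.Subgraph) : Prop :=
  Minimal4Hammock G H ∧ FatHammock G H

/-- The list `l` records a cycle of `G` (vertices in clockwise order). -/
def IsCycleList (G : SimpleGraph V) (l : List V) : Prop :=
  l.Nodup ∧ 3 ≤ l.length ∧
    ∀ i : Fin l.length,
      G.Adj (l.get i) (l.get ⟨((i : ℕ) + 1) % l.length, Nat.mod_lt _ i.pos⟩)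

/-- `x` and `y` are consecutive on the cyclic list `C`. -/
def CycAdj (C : List V) (x y : V) : Prop :=
  ∃ i : Fin C.length,
    (C.get i = x ∧ C.get ⟨((i : ℕ) + 1) % C.length, Nat.mod_lt _ i.pos⟩ = y) ∨
    (C.get i = y ∧ C.get ⟨((i : ℕ) + 1) % C.length, Nat.mod_lt _ i.pos⟩ = x)

/-- Clockwise (forward) distance between positions on a cycle of length `n`. -/
def cycDist (n i j : ℕ) : ℕ := (j + n - i) % n

/-- The open segment of the cycle `C` from `a` clockwise to `b`. -/
def segOpen (C : List V) (a b : V) : Set V :=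
  {x | ∃ i j k : Fin C.length, C.get i = a ∧ C.get j = b ∧ C.get k = x ∧
    k ≠ i ∧ k ≠ j ∧ cycDist C.length (i : ℕ) (k : ℕ) < cycDist C.length (i : ℕ) (j : ℕ)}

/-- The closed segment of the cycle `C` from `a` clockwise to `b`. -/
def segClosed (C : List V) (a b : V) : Set V := segOpen C a b ∪ {a, b}

/-- `a 0, a 1, a 2, a 3` appear in this clockwise order along the cycle `C`. -/
def ClockwiseOn (C : List V) (a : Fin 4 → V) : Prop :=
  ∃ p : Fin 4 → Fin C.length, (∀ j, C.get (p j) = a j) ∧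
    ∀ j k : Fin 4, j < k →
      cycDist C.length ((p 0 : Fin C.length) : ℕ) ((p j : Fin C.length) : ℕ) <
        cycDist C.length ((p 0 : Fin C.length) : ℕ) ((p k : Fin C.length) : ℕ)

/-- `x` and `y` are consecutive among the points of `S` on the cycle `C`:
one of the two open arcs between them misses `S`. -/
def ConsecutiveOn (C : List V) (S : Set V) (x y : V) : Prop :=
  segOpen C x y ∩ S = ∅ ∨ segOpen C y x ∩ S = ∅

/-- A combinatorial plane graph: a graph together with its facial cycles and a
distinguished outer face; every edge lies on exactly two faces and every vertex
on exactly `deg` faces (valid for `2`-connected plane graphs). -/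
structure PlaneGraph (V : Type*) where
  graph : SimpleGraph V
  faces : Finset (List V)
  outer : List V
  outer_mem : outer ∈ faces
  faces_cycle : ∀ f ∈ faces, IsCycleList graph f
  edge_two_faces : ∀ x y, graph.Adj x y →
    {f ∈ (faces : Set (List V)) | CycAdj f x y}.ncard = 2
  vertex_faces : ∀ v : V,
    {f ∈ (faces : Set (List V)) | v ∈ f}.ncard = (graph.neighborSet v).ncard

def Cofacial (P : PlaneGraph V) (u w : V) : Prop :=
  ∃ f ∈ P.faces, u ∈ f ∧ w ∈ f

/-- `C` is the rim of the facial wheel `S_u`: the induced cycle on the vertices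
cofacial with `u`, containing `N(u)` and separating `u` from the rest of the graph. -/
def IsFacialRim (P : PlaneGraph V) (u : V) (C : List V) : Prop :=
  IsCycleList P.graph C ∧ u ∉ C ∧
  (∀ w, w ∈ C ↔ (w ≠ u ∧ Cofacial P u w)) ∧
  P.graph.neighborSet u ⊆ {x | x ∈ C} ∧
  (∀ x ∈ C, ∀ y ∈ C, P.graph.Adj x y → CycAdj C x y) ∧
  (∀ w, w ∉ C → w ≠ u → ∀ p : P.graph.Walk u w, ∃ x ∈ p.support, x ∈ C)

/-- The facial wheel `S_u` (hub `u`, spokes, and rim `C`) is a subgraph of `H`. -/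
def WheelIn (G : SimpleGraph V) (H : G.Subgraph) (u : V) (C : List V) : Prop :=
  u ∈ H.verts ∧ (∀ x ∈ C, x ∈ H.verts) ∧
  (∀ x, G.Adj u x → H.Adj u x) ∧
  (∀ x y, CycAdj C x y → H.Adj x y)

/-- A system of `k` pairwise vertex-disjoint `(A,B)`-paths inside the subgraph `H`,
internally disjoint from `A ∪ B`. -/
structure Linkage (G : SimpleGraph V) (H : G.Subgraph) (A B : Set V) (k : ℕ) where
  s : Fin k → V
  t : Fin k → V
  walk : ∀ i, G.Walk (s i) (t i)
  isPath : ∀ i, (walk i).IsPath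
  support_mem : ∀ i, ∀ x ∈ (walk i).support, x ∈ H.verts
  edges_mem : ∀ i, ∀ e ∈ (walk i).edges, e ∈ H.edgeSet
  s_mem : ∀ i, s i ∈ A
  t_mem : ∀ i, t i ∈ B
  internal : ∀ i, ∀ x ∈ (walk i).support, x ≠ s i → x ≠ t i → x ∉ A ∧ x ∉ B
  disj : ∀ i j, i ≠ j → ∀ x ∈ (walk i).support, x ∉ (walk j).support

/-- A `C_u`-linkage: a `(bnd H, C)`-4-linkage in `H`. -/
abbrev CuLinkage (G : SimpleGraph V) (H : G.Subgraph) (C : List V) :=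
  Linkage G H (bnd G H) {x | x ∈ C} 4

/-- `α(L)`: the number of endpoints of the linkage lying in `N(u)`. -/
noncomputable def lAlpha (G : SimpleGraph V) (u : V) {H : G.Subgraph} {A B : Set V} {k : ℕ}
    (L : Linkage G H A B k) : ℕ :=
  {i : Fin k | L.t i ∈ G.neighborSet u}.ncard

/-- Data of a short wheel: the four neighbours of `u` in clockwise rim order,
two edge-disjoint triangles at `u`, and the two remaining rim segments of
order between 2 and 4, not both of order 4. -/
def ShortWheelOn (G : SimpleGraph V) (u : V) (C : List V) (n : Fin 4 → V) : Prop :=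
  ClockwiseOn C n ∧ Set.range n = G.neighborSet u ∧
  G.Adj (n 0) (n 1) ∧ G.Adj (n 2) (n 3) ∧
  (segOpen C (n 1) (n 2)).ncard ≤ 2 ∧ (segOpen C (n 3) (n 0)).ncard ≤ 2 ∧
  ¬((segOpen C (n 1) (n 2)).ncard = 2 ∧ (segOpen C (n 3) (n 0)).ncard = 2)

def IsShortWheel (G : SimpleGraph V) (u : V) (C : List V) : Prop :=
  (G.neighborSet u).ncard = 4 ∧ ∃ n, ShortWheelOn G u C n

/-- A short wheel which, if imbalanced (a segment of order 4), is proper with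
respect to the boundary set `B`: the interior of that segment avoids `B`. -/
def IsShortProperWheel (G : SimpleGraph V) (u : V) (C : List V) (B : Set V) : Prop :=
  (G.neighborSet u).ncard = 4 ∧ ∃ n, ShortWheelOn G u C n ∧
    ((segOpen C (n 1) (n 2)).ncard = 2 → segOpen C (n 1) (n 2) ∩ B = ∅) ∧
    ((segOpen C (n 3) (n 0)).ncard = 2 → segOpen C (n 3) (n 0) ∩ B = ∅)


section Stmt3Aux

open SimpleGraph

variable {G : SimpleGraph V}

private lemma walk_toSubgraph_le_iff {u v : V} (p : G.Walk u v) (K : G.Subgraph) :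
    p.toSubgraph ≤ K ↔
      (∀ z ∈ p.support, z ∈ K.verts) ∧ (∀ e ∈ p.edges, e ∈ K.edgeSet) := by
  constructor
  · exact fun h => ⟨fun z hz => h.1 (p.mem_verts_toSubgraph.2 hz),
      fun e he => Subgraph.edgeSet_mono h (p.mem_edges_toSubgraph.2 he)⟩
  · rintro ⟨hs, he⟩
    refine ⟨fun z hz => hs z (p.mem_verts_toSubgraph.1 hz), fun {a b} hab => ?_⟩
    have h1 : s(a, b) ∈ p.toSubgraph.edgeSet := hab
    rw [p.mem_edges_toSubgraph] at h1
    exact (Subgraph.mem_edgeSet).1 (he _ h1)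

/-- Reachability inside `H` avoiding the vertex `v0`. -/
private def RR (G : SimpleGraph V) (H : G.Subgraph) (v0 : V) (x y : V) : Prop :=
  ∃ w : G.Walk x y, (∀ z ∈ w.support, z ∈ H.verts \ {v0}) ∧ (∀ e ∈ w.edges, e ∈ H.edgeSet)

private lemma RR.refl {H : G.Subgraph} {v0 x : V} (hx : x ∈ H.verts \ {v0}) : RR G H v0 x x :=
  ⟨Walk.nil, by simpa using hx, by simp⟩

private lemma RR.symm {H : G.Subgraph} {v0 x y : V} (h : RR G H v0 x y) : RR G H v0 y x := by
  obtain ⟨w, h1, h2⟩ := h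
  exact ⟨w.reverse, fun z hz => h1 z (by simpa using hz), fun e he => h2 e (by simpa using he)⟩

private lemma RR.trans {H : G.Subgraph} {v0 x y z : V} (h : RR G H v0 x y)
    (h' : RR G H v0 y z) : RR G H v0 x z := by
  obtain ⟨w, h1, h2⟩ := h; obtain ⟨w', h1', h2'⟩ := h'
  refine ⟨w.append w', fun t ht => ?_, fun e he => ?_⟩
  · rcases (Walk.mem_support_append_iff _ _).1 ht with h | h
    exacts [h1 t h, h1' t h]
  · rw [Walk.edges_append, List.mem_append] at he
    rcases he with h | h
    exacts [h2 e h, h2' e h]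

private lemma RR.mem_left {H : G.Subgraph} {v0 x y : V} (h : RR G H v0 x y) :
    x ∈ H.verts \ {v0} := by
  obtain ⟨w, h1, _⟩ := h; exact h1 _ w.start_mem_support

private lemma RR.mem_right {H : G.Subgraph} {v0 x y : V} (h : RR G H v0 x y) :
    y ∈ H.verts \ {v0} := by
  obtain ⟨w, h1, _⟩ := h; exact h1 _ w.end_mem_support

private lemma RR.step {H : G.Subgraph} {v0 x y z : V} (h : RR G H v0 x y)
    (ha : H.Adj y z) (hz : z ≠ v0) : RR G H v0 x z := by
  refine h.trans ⟨Walk.cons ha.adj_sub Walk.nil, ?_, ?_⟩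
  · intro t ht
    simp only [Walk.support_cons, Walk.support_nil, List.mem_cons, List.not_mem_nil,
      or_false] at ht
    rcases ht with rfl | rfl
    · exact h.mem_right
    · exact ⟨ha.snd_mem, hz⟩
  · intro e he
    simp only [Walk.edges_cons, Walk.edges_nil, List.mem_cons, List.not_mem_nil,
      or_false] at he
    subst he
    exact (Subgraph.mem_edgeSet).2 ha

private lemma sep_subset [Fintype V] (h4 : IsKConnected 4 G) (A T : Set V) (hT : T.ncard ≤ 3)
    (hcl : ∀ x ∈ A \ T, ∀ y, G.Adj x y → y ∈ A)
    (q : V) (hqA : q ∉ A) (hqT : q ∉ T) : A ⊆ T := by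
  intro p hp
  by_contra hpT
  have hconn := h4.2 T (Set.toFinite T) (by omega)
  have key : ∀ (x y : ↥(Tᶜ)) (w : (G.induce Tᶜ).Walk x y), (x : V) ∈ A → (y : V) ∉ A → False := by
    intro x y w
    induction w with
    | nil => exact fun h1 h2 => h2 h1
    | cons h wtail ih =>
      intro h1 h2
      rename_i u s _
      have hadj : G.Adj (u : V) (s : V) := h
      exact ih (hcl _ ⟨h1, u.2⟩ _ hadj) h2
  obtain ⟨w⟩ := hconn.preconnected ⟨p, hpT⟩ ⟨q, hqT⟩
  exact key _ _ w hp hqA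

private lemma mindeg [Fintype V] (h4 : IsKConnected 4 G) (x : V) :
    4 ≤ (G.neighborSet x).ncard := by
  by_contra hlt
  push_neg at hlt
  have hT : (G.neighborSet x).ncard ≤ 3 := by omega
  have hA : (insert x (G.neighborSet x)).ncard ≤ 4 :=
    le_trans (Set.ncard_insert_le _ _) (by omega)
  have hlt' : (insert x (G.neighborSet x)).ncard < (Set.univ : Set V).ncard :=
    lt_of_le_of_lt hA h4.1
  obtain ⟨q, _, hqA⟩ := Set.exists_mem_notMem_of_ncard_lt_ncard hlt'
  have hsub := sep_subset h4 (insert x (G.neighborSet x)) (G.neighborSet x) hT ?_ q hqA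
    (fun h => hqA (Set.mem_insert_of_mem _ h))
  · exact G.loopless.irrefl x (hsub (Set.mem_insert x _))
  · rintro y ⟨hyA, hyT⟩ z hz
    rcases hyA with rfl | h
    · exact Set.mem_insert_of_mem _ hz
    · exact absurd h hyT




private lemma trim_walk {H : G.Subgraph} {a v0 : V}
    (haN : ∀ t, H.Adj a t → t = v0) (hv0H : v0 ∈ H.verts) (hav0ne : a ≠ v0) :
    ∀ {x y : V} (p : G.Walk x y), y = v0 → p.toSubgraph ≤ H → x ≠ a →
      ∃ p' : G.Walk x y, p'.toSubgraph ≤ H.deleteVerts {a} := by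
  intro x y p
  induction p with
  | nil =>
    rintro rfl _ hxa
    refine ⟨Walk.nil, ?_⟩
    rw [Walk.toSubgraph, SimpleGraph.singletonSubgraph_le_iff]
    exact ⟨hv0H, fun h => hav0ne (Set.mem_singleton_iff.1 h).symm⟩
  | cons h q ih =>
    rename_i u m y'
    intro hy hle hxa
    have hs := (walk_toSubgraph_le_iff _ _).1 hle
    have hHum : H.Adj u m := (Subgraph.mem_edgeSet).1 (hs.2 s(u, m) (by simp))
    have hq : q.toSubgraph ≤ H := le_trans le_sup_right hle
    by_cases hxv : u = v0
    · subst hy; subst hxv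
      refine ⟨Walk.nil, ?_⟩
      rw [Walk.toSubgraph, SimpleGraph.singletonSubgraph_le_iff]
      exact ⟨hv0H, fun h => hav0ne (Set.mem_singleton_iff.1 h).symm⟩
    · have hma : m ≠ a := by
        intro hma; subst hma
        exact hxv (haN u hHum.symm)
      obtain ⟨p', hp'⟩ := ih hy hq hma
      refine ⟨Walk.cons h p', ?_⟩
      refine sup_le (SimpleGraph.subgraphOfAdj_le_of_adj _ ?_) hp'
      rw [Subgraph.deleteVerts_adj]
      exact ⟨hHum.fst_mem, by simpa using hxa, hHum.snd_mem, by simpa using hma, hHum⟩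

private lemma dicho [Fintype V] (h4 : IsKConnected 4 G)
    {H : G.Subgraph} (v0 a b : V)
    (ha : a ∈ H.verts \ {v0}) (hb : b ∈ H.verts \ {v0}) (hnR : ¬ RR G H v0 a b) :
    3 ≤ (bnd G H ∩ {x | RR G H v0 a x}).ncard ∨ {x | RR G H v0 a x} ⊆ bnd G H := by
  set B := bnd G H with hBdef
  set C := {x | RR G H v0 a x} with hCdef
  by_cases hc : 3 ≤ (B ∩ C).ncard
  · exact Or.inl hc
  push_neg at hc
  right
  have hnotB : ∀ x ∈ H.verts, x ∉ B → ∀ y, G.Adj x y → H.Adj x y := by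
    intro x hx hxB y hxy
    by_contra hcc
    exact hxB ⟨hx, y, hxy, hcc⟩
  have hcl : ∀ x ∈ (C ∪ {v0}) \ ((B ∩ C) ∪ {v0}), ∀ y, G.Adj x y → y ∈ C ∪ {v0} := by
    intro x hx y hxy
    obtain ⟨hxA, hxT⟩ := hx
    have hxv0 : x ≠ v0 := fun h => hxT (Or.inr h)
    have hxC : x ∈ C := by
      rcases hxA with h | h
      · exact h
      · exact absurd h hxv0
    have hxB : x ∉ B := fun h => hxT (Or.inl ⟨h, hxC⟩)
    have hxW : x ∈ H.verts \ {v0} := RR.mem_right hxC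
    have hH' := hnotB x hxW.1 hxB y hxy
    by_cases hyv0 : y = v0
    · exact Or.inr hyv0
    · exact Or.inl (RR.step hxC hH' hyv0)
  have hTc : ((B ∩ C) ∪ {v0}).ncard ≤ 3 := by
    have h1 := Set.ncard_union_le (B ∩ C) ({v0} : Set V)
    rw [Set.ncard_singleton] at h1
    omega
  have hAT := sep_subset h4 (C ∪ {v0}) ((B ∩ C) ∪ {v0}) hTc hcl b
    (by rintro (h | h)
        · exact hnR h
        · exact hb.2 h)
    (by rintro (⟨_, h⟩ | h)
        · exact hnR h
        · exact hb.2 h)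
  intro x hxC
  rcases hAT (Or.inl hxC) with h | h
  · exact h.1
  · exact absurd h (RR.mem_right hxC).2

private lemma finisher [Fintype V] (h4 : IsKConnected 4 G)
    (hk4 : ¬ containsK4minus G) {H : G.Subgraph} (hH : MinimalFat4Hammock G H)
    (v0 a o : V) (ha : a ∈ H.verts \ {v0}) (ho : o ∈ H.verts \ {v0})
    (hnR : ¬ RR G H v0 a o)
    (hsub : {x | RR G H v0 a x} ⊆ bnd G H) : False := by
  obtain ⟨⟨⟨hconn, hB4⟩, hmin⟩, hfat⟩ := hH
  set B := bnd G H with hBdef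
  have hfat' : B.ncard + 2 ≤ H.verts.ncard := hfat
  have h6 : 6 ≤ H.verts.ncard := by rw [hB4] at hfat'; omega
  set C := {x | RR G H v0 a x} with hCdef
  have haC : a ∈ C := RR.refl ha
  have hnotB : ∀ x ∈ H.verts, x ∉ B → ∀ y, G.Adj x y → H.Adj x y := by
    intro x hx hxB y hxy
    by_contra hcc
    exact hxB ⟨hx, y, hxy, hcc⟩
  -- closure of H.verts \ C
  have hclA : ∀ x ∈ (H.verts \ C) \ ((B \ C) ∪ {v0}), ∀ y, G.Adj x y → y ∈ H.verts \ C := by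
    intro x hx y hxy
    obtain ⟨⟨hxH, hxC⟩, hxT⟩ := hx
    have hxB : x ∉ B := fun hxB => hxT (Or.inl ⟨hxB, hxC⟩)
    have hxv0 : x ≠ v0 := fun h => hxT (Or.inr h)
    have hHxy := hnotB x hxH hxB y hxy
    refine ⟨hHxy.snd_mem, fun hyC => ?_⟩
    exact hxC (RR.step hyC hHxy.symm hxv0)
  have hT4 : 4 ≤ ((B \ C) ∪ {v0}).ncard := by
    by_contra hcc
    push_neg at hcc
    have hsubT := sep_subset h4 (H.verts \ C) ((B \ C) ∪ {v0}) (by omega) hclA a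
      (fun hA => hA.2 haC)
      (by rintro (⟨_, hnc⟩ | h)
          · exact hnc haC
          · exact ha.2 h)
    have hle5 : (B ∪ {v0}).ncard ≤ 5 := by
      have h1 := Set.ncard_union_le B ({v0} : Set V)
      rw [Set.ncard_singleton, hB4] at h1
      omega
    have hlt6 : (B ∪ {v0} : Set V).ncard < H.verts.ncard := by omega
    obtain ⟨p, hpH, hpn⟩ := Set.exists_mem_notMem_of_ncard_lt_ncard hlt6
    have hpC : p ∉ C := fun h => hpn (Or.inl (hsub h))
    rcases hsubT ⟨hpH, hpC⟩ with ⟨hpB, _⟩ | hpv0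
    · exact hpn (Or.inl hpB)
    · exact hpn (Or.inr hpv0)
  have hCB : C ⊆ B := hsub
  have hdc : (B \ C).ncard = 4 - C.ncard := by
    rw [Set.ncard_diff hCB, hB4]
  have hCpos : 0 < C.ncard := (Set.ncard_pos (Set.toFinite _)).2 ⟨a, haC⟩
  have hv0C : v0 ∉ C := fun h => (RR.mem_right h).2 rfl
  have hv0B : v0 ∉ B := by
    intro hv0B
    have heq : (B \ C) ∪ {v0} = B \ C := by
      apply Set.union_eq_self_of_subset_right
      rw [Set.singleton_subset_iff]
      exact ⟨hv0B, hv0C⟩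
    rw [heq, hdc] at hT4
    omega
  have hC1 : C.ncard = 1 := by
    have h1 := Set.ncard_union_le (B \ C) ({v0} : Set V)
    rw [Set.ncard_singleton] at h1
    omega
  have hCa : C = {a} := by
    obtain ⟨x, hx⟩ := Set.ncard_eq_one.1 hC1
    rw [hx] at haC
    rw [Set.mem_singleton_iff] at haC
    rw [hx, haC]
  have haB : a ∈ B := hCB haC
  have haN : ∀ t, H.Adj a t → t = v0 := by
    intro t ht
    by_contra htv
    have htC : t ∈ C := RR.step (RR.refl ha) ht htv
    rw [hCa, Set.mem_singleton_iff] at htC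
    subst htC
    exact (ht.adj_sub).ne rfl
  -- a has the neighbor v0 in H
  have hav0 : H.Adj a v0 := by
    obtain ⟨x, hxH, hxa⟩ := Set.exists_ne_of_one_lt_ncard (show 1 < H.verts.ncard by omega) a
    obtain ⟨pw, hpw⟩ :=
      ((Subgraph.connected_iff_forall_exists_walk_subgraph H).1 hconn).2 ha.1 hxH
    have hnn : ¬ pw.Nil := Walk.not_nil_of_ne (Ne.symm hxa)
    have hlen : 0 < pw.length := by
      rcases Nat.eq_zero_or_pos pw.length with h0 | h0
      · exact absurd (Walk.nil_iff_length_eq.2 h0) hnn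
      · exact h0
    have hadj := pw.toSubgraph_adj_getVert hlen
    rw [Walk.getVert_zero] at hadj
    have hHadj : H.Adj a (pw.getVert 1) := hpw.2 hadj
    have := haN _ hHadj
    rw [this] at hHadj
    exact hHadj
  have hv0H : v0 ∈ H.verts := hav0.snd_mem
  have hav0ne : a ≠ v0 := fun h => ha.2 h
  -- the smaller hammock
  set H₂ := H.deleteVerts {a} with hH₂def
  have hle : H₂ ≤ H := Subgraph.deleteVerts_le
  have hH₂verts : H₂.verts = H.verts \ {a} := Subgraph.deleteVerts_verts
  have hneq : H₂ ≠ H := by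
    intro h
    have hmem : a ∈ H₂.verts := by rw [h]; exact ha.1
    rw [hH₂verts] at hmem
    exact hmem.2 rfl
  have hv0H₂ : v0 ∈ H₂.verts := by
    rw [hH₂verts]
    exact ⟨hv0H, fun h => hav0ne (Set.mem_singleton_iff.1 h).symm⟩
  have hH₂conn : H₂.Connected := by
    rw [Subgraph.connected_iff_forall_exists_walk_subgraph]
    refine ⟨⟨v0, hv0H₂⟩, ?_⟩
    have hwalks : ∀ {u v : V}, u ∈ H.verts → v ∈ H.verts →
        ∃ p : G.Walk u v, p.toSubgraph ≤ H :=
      ((Subgraph.connected_iff_forall_exists_walk_subgraph H).1 hconn).2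
    have claim : ∀ x, x ∈ H₂.verts → ∃ p : G.Walk x v0, p.toSubgraph ≤ H₂ := by
      intro x hx
      rw [hH₂verts] at hx
      obtain ⟨p, hp⟩ := hwalks hx.1 hv0H
      exact trim_walk haN hv0H hav0ne p rfl hp (fun h => hx.2 (by simp [h]))
    intro u w hu hw
    obtain ⟨pu, hpu⟩ := claim u hu
    obtain ⟨pw, hpw⟩ := claim w hw
    exact ⟨pu.append pw.reverse,
      by rw [Walk.toSubgraph_append, Walk.toSubgraph_reverse]; exact sup_le hpu hpw⟩
  have hbnd2 : bnd G H₂ = insert v0 (B \ {a}) := by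
    ext x
    simp only [bnd, Set.mem_setOf_eq, Set.mem_insert_iff]
    constructor
    · rintro ⟨hxv, y, hGxy, hnH₂⟩
      rw [hH₂verts] at hxv
      obtain ⟨hxH, hxa⟩ := hxv
      by_cases hxv0 : x = v0
      · exact Or.inl hxv0
      · right
        refine ⟨⟨hxH, y, hGxy, fun hH' => ?_⟩, hxa⟩
        have hya : y ≠ a := by
          intro h
          rw [h] at hH'
          exact hxv0 (haN x hH'.symm)
        refine hnH₂ ?_
        rw [hH₂def, Subgraph.deleteVerts_adj]
        exact ⟨hxH, by simpa using hxa, hH'.snd_mem, by simpa using hya, hH'⟩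
    · rintro (rfl | ⟨⟨hxH, y, hGxy, hnH⟩, hxa⟩)
      · refine ⟨hv0H₂, a, (hav0.adj_sub).symm, fun hc => ?_⟩
        rw [hH₂def, Subgraph.deleteVerts_adj] at hc
        exact hc.2.2.2.1 rfl
      · exact ⟨by rw [hH₂verts]; exact ⟨hxH, by simpa using hxa⟩, y, hGxy,
          fun hc => hnH (hle.2 hc)⟩
  have hxa' : a ∉ ({a} : Set V)ᶜ := by simp
  have hv0Ba : v0 ∉ B \ {a} := fun h => hv0B h.1
  have haBs : a ∈ ({a} : Set V) := rfl
  have hbnd2card : (bnd G H₂).ncard = 4 := by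
    rw [hbnd2, Set.ncard_insert_of_notMem hv0Ba, Set.ncard_diff_singleton_of_mem haB, hB4]
  have hH₂vcard : H₂.verts.ncard = H.verts.ncard - 1 := by
    rw [hH₂verts]
    exact Set.ncard_diff_singleton_of_mem ha.1
  have h5 : H₂.verts.ncard = 5 := by
    rcases hmin H₂ hle hneq ⟨hH₂conn, hbnd2card⟩ with htriv | hdeg
    · exfalso
      have h := congrArg Set.ncard (htriv : H₂.verts = bnd G H₂)
      rw [hbnd2card] at h
      omega
    · have hdeg' : H₂.verts.ncard = (bnd G H₂).ncard + 1 := hdeg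
      rw [hdeg', hbnd2card]
  have h6' : H.verts.ncard = 6 := by omega
  have hbsubv : bnd G H₂ ⊆ H₂.verts := fun x hx => hx.1
  obtain ⟨w, hwv, hwnb⟩ := Set.exists_mem_notMem_of_ncard_lt_ncard
    (show (bnd G H₂).ncard < H₂.verts.ncard by omega)
  have hvertsEq : insert w (bnd G H₂) = H₂.verts := by
    refine Set.eq_of_subset_of_ncard_le ?_ ?_ (Set.toFinite _)
    · exact Set.insert_subset hwv hbsubv
    · rw [Set.ncard_insert_of_notMem hwnb, hbnd2card, h5]
  have hwadj : ∀ y, G.Adj w y → H₂.Adj w y := by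
    intro y hy
    by_contra hc
    exact hwnb ⟨hwv, y, hy, hc⟩
  have hNw : G.neighborSet w = bnd G H₂ := by
    refine Set.eq_of_subset_of_ncard_le ?_ ?_ (Set.toFinite _)
    · intro y hy
      have h2 := hwadj y hy
      have hyv : y ∈ H₂.verts := h2.snd_mem
      rw [← hvertsEq] at hyv
      rcases Set.mem_insert_iff.1 hyv with rfl | h
      · exact absurd hy (G.loopless.irrefl _)
      · exact h
    · rw [hbnd2card]
      exact mindeg h4 w
  have hGwv0 : G.Adj w v0 := by
    have hm : v0 ∈ G.neighborSet w := by rw [hNw, hbnd2]; exact Set.mem_insert _ _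
    exact hm
  have hGwb : ∀ y ∈ B \ {a}, G.Adj w y := by
    intro y hy
    have hm : y ∈ G.neighborSet w := by rw [hNw, hbnd2]; exact Set.mem_insert_of_mem _ hy
    exact hm
  have hNv0 : G.neighborSet v0 ⊆ {a, w} ∪ (B \ {a}) := by
    intro y hy
    have hH' : H.Adj v0 y := hnotB v0 hv0H hv0B y hy
    have hyH : y ∈ H.verts := hH'.snd_mem
    by_cases hya : y = a
    · exact Or.inl (Or.inl hya)
    have hyH₂ : y ∈ H₂.verts := by
      rw [hH₂verts]
      exact ⟨hyH, by simpa using hya⟩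
    rw [← hvertsEq] at hyH₂
    rcases Set.mem_insert_iff.1 hyH₂ with rfl | h
    · exact Or.inl (Or.inr rfl)
    · rw [hbnd2] at h
      rcases Set.mem_insert_iff.1 h with rfl | h'
      · exact absurd hy (G.loopless.irrefl _)
      · exact Or.inr h'
  have hcard2 : 2 ≤ (G.neighborSet v0 ∩ (B \ {a})).ncard := by
    have hsplit : G.neighborSet v0 ⊆ ({a, w} : Set V) ∪ (G.neighborSet v0 ∩ (B \ {a})) := by
      intro y hy
      rcases hNv0 hy with h | h
      · exact Or.inl h
      · exact Or.inr ⟨hy, h⟩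
    have h1 := Set.ncard_le_ncard hsplit (Set.toFinite _)
    have h2 := Set.ncard_union_le ({a, w} : Set V) (G.neighborSet v0 ∩ (B \ {a}))
    have h3 : ({a, w} : Set V).ncard ≤ 2 := by
      have h5' := Set.ncard_insert_le a ({w} : Set V)
      rw [Set.ncard_singleton] at h5'
      exact h5'
    have h4' := mindeg h4 v0
    omega
  obtain ⟨bi, hbi, bj, hbj, hij⟩ :
      ∃ bi ∈ G.neighborSet v0 ∩ (B \ {a}), ∃ bj ∈ G.neighborSet v0 ∩ (B \ {a}), bi ≠ bj :=
    (Set.one_lt_ncard (Set.toFinite _)).1 (by omega)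
  have hbiB : bi ∈ bnd G H₂ := by rw [hbnd2]; exact Set.mem_insert_of_mem _ hbi.2
  have hbjB : bj ∈ bnd G H₂ := by rw [hbnd2]; exact Set.mem_insert_of_mem _ hbj.2
  have hv0bnd : v0 ∈ bnd G H₂ := by rw [hbnd2]; exact Set.mem_insert _ _
  refine hk4 ⟨v0, w, bi, bj, ?_, ?_, ?_, ?_, ?_, hij, hGwv0.symm, hbi.1, hbj.1,
    hGwb bi hbi.2, hGwb bj hbj.2⟩
  · exact fun h => hwnb (h ▸ hv0bnd)
  · exact fun h => hv0B (h ▸ hbi.2.1)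
  · exact fun h => hv0B (h ▸ hbj.2.1)
  · exact fun h => hwnb (h ▸ hbiB)
  · exact fun h => hwnb (h ▸ hbjB)
private lemma key_reach [Fintype V] (h4 : IsKConnected 4 G)
    (hk4 : ¬ containsK4minus G) {H : G.Subgraph} (hH : MinimalFat4Hammock G H) (v0 : V) :
    ∀ a ∈ H.verts \ {v0}, ∀ b ∈ H.verts \ {v0}, RR G H v0 a b := by
  by_contra hcon
  push_neg at hcon
  obtain ⟨a, ha, b, hb, hnR⟩ := hcon
  have hB4 : (bnd G H).ncard = 4 := hH.1.1.2
  rcases dicho h4 v0 a b ha hb hnR with h3a | hsa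
  · rcases dicho h4 v0 b a hb ha (fun h => hnR h.symm) with h3b | hsb
    · have hdisj : Disjoint (bnd G H ∩ {x | RR G H v0 a x}) (bnd G H ∩ {x | RR G H v0 b x}) := by
        rw [Set.disjoint_left]
        rintro x ⟨_, hxa⟩ ⟨_, hxb⟩
        exact hnR (RR.trans hxa (RR.symm hxb))
      have hun := Set.ncard_union_eq hdisj (Set.toFinite _) (Set.toFinite _)
      have hsubB : (bnd G H ∩ {x | RR G H v0 a x}) ∪ (bnd G H ∩ {x | RR G H v0 b x}) ⊆ bnd G H :=
        Set.union_subset Set.inter_subset_left Set.inter_subset_left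
      have hleB := Set.ncard_le_ncard hsubB (Set.toFinite _)
      omega
    · exact finisher h4 hk4 hH v0 b a hb ha (fun h => hnR h.symm) hsb
  · exact finisher h4 hk4 hH v0 a b ha hb hnR hsa

private lemma lift_reach {H : G.Subgraph} (v : ↥H.verts) :
    ∀ {x y : V} (w : G.Walk x y),
      (∀ z ∈ w.support, z ∈ H.verts \ {(v : V)}) → (∀ e ∈ w.edges, e ∈ H.edgeSet) →
      ∀ (hx : x ∈ H.verts) (hxv : (⟨x, hx⟩ : ↥H.verts) ∈ ({v}ᶜ : Set ↥H.verts))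
        (hy : y ∈ H.verts) (hyv : (⟨y, hy⟩ : ↥H.verts) ∈ ({v}ᶜ : Set ↥H.verts)),
      (H.coe.induce ({v}ᶜ : Set ↥H.verts)).Reachable ⟨⟨x, hx⟩, hxv⟩ ⟨⟨y, hy⟩, hyv⟩ := by
  intro x y w
  induction w with
  | nil =>
    intro _ _ hx hxv hy hyv
    exact Reachable.refl _
  | cons h q ih =>
    rename_i u m _
    intro hsup hedg hx hxv hy hyv
    have hmW : m ∈ H.verts \ {(v : V)} := hsup m (by simp)
    have hHum : H.Adj u m := (Subgraph.mem_edgeSet).1 (hedg _ (by simp))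
    have hmv : (⟨m, hmW.1⟩ : ↥H.verts) ∈ ({v}ᶜ : Set ↥H.verts) := by
      intro hmem
      rw [Set.mem_singleton_iff] at hmem
      exact hmW.2 (by rw [Set.mem_singleton_iff]; exact congrArg Subtype.val hmem)
    have hadj : (H.coe.induce ({v}ᶜ : Set ↥H.verts)).Adj ⟨⟨u, hx⟩, hxv⟩ ⟨⟨m, hmW.1⟩, hmv⟩ := hHum
    exact (hadj.reachable).trans
      (ih (fun z hz => hsup z (by simp [hz])) (fun e he => hedg e (by simp [he]))
        hmW.1 hmv hy hyv)
end Stmt3Aux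

/-- A minimal fat 4-hammock of a 4-connected graph with no `K₄⁻`
subgraph is 2-connected. -/
theorem stmt3 {V : Type*} [Fintype V] (G : SimpleGraph V)
    (h4 : IsKConnected 4 G) (hk4 : ¬ containsK4minus G)
    (H : G.Subgraph) (hH : MinimalFat4Hammock G H) :
    IsKConnected 2 H.coe := by
  have hconn : H.Connected := hH.1.1.1
  have hB4 : (bnd G H).ncard = 4 := hH.1.1.2
  have hfat' : (bnd G H).ncard + 2 ≤ H.verts.ncard := hH.2
  have h6 : 6 ≤ H.verts.ncard := by omega
  have huniv : (Set.univ : Set ↥H.verts).ncard = H.verts.ncard := by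
    rw [Set.ncard_univ, Nat.card_coe_set_eq]
  constructor
  · rw [huniv]; omega
  · intro S hSfin hS2
    have hS1 : S.ncard ≤ 1 := by omega
    rcases (Set.ncard_le_one_iff_eq hSfin).1 hS1 with rfl | ⟨v, rfl⟩
    · rw [Set.compl_empty]
      exact (induceUnivIso H.coe).connected_iff.2 hconn.coe
    · have hkey := key_reach h4 hk4 hH (v : V)
      obtain ⟨u, huH, huv⟩ :=
        Set.exists_ne_of_one_lt_ncard (show 1 < H.verts.ncard by omega) (v : V)
      haveI hne : Nonempty ↥(({v} : Set ↥H.verts)ᶜ) :=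
        ⟨⟨⟨u, huH⟩, fun h => huv (congrArg Subtype.val (Set.mem_singleton_iff.1 h))⟩⟩
      refine ⟨?_⟩
      rintro ⟨⟨xv, hxH⟩, hxv⟩ ⟨⟨yv, hyH⟩, hyv⟩
      have hxW : xv ∈ H.verts \ {(v : V)} :=
        ⟨hxH, fun h => hxv (Set.mem_singleton_iff.2
          (Subtype.ext (Set.mem_singleton_iff.1 h)))⟩
      have hyW : yv ∈ H.verts \ {(v : V)} :=
        ⟨hyH, fun h => hyv (Set.mem_singleton_iff.2
          (Subtype.ext (Set.mem_singleton_iff.1 h)))⟩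
      obtain ⟨w, hw1, hw2⟩ := hkey xv hxW yv hyW
      exact lift_reach v w hw1 hw2 hxH hxv hyH hyv
end

section
/- Let G be a 5-connected graph and let v be a vertex of G such that G − v has a 4-valent vertex u. If both 4-hammocks of G − v with boundary N_{G−v}(u) are degenerate, then G has exactly 7 vertices, and G contains a subdivision of K₅. -/
open SimpleGraph

variable {V : Type*}

/-! ### Auxiliary lemmas for `stmt14` -/

lemma aux_inj5 {a0 a1 a2 a3 a4 : V} (h01 : a0 ≠ a1) (h02 : a0 ≠ a2) (h03 : a0 ≠ a3)
    (h04 : a0 ≠ a4) (h12 : a1 ≠ a2) (h13 : a1 ≠ a3) (h14 : a1 ≠ a4) (h23 : a2 ≠ a3)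
    (h24 : a2 ≠ a4) (h34 : a3 ≠ a4) : Function.Injective ![a0, a1, a2, a3, a4] := by
  intro i j h
  fin_cases i <;> fin_cases j <;> simp_all

lemma aux_adj5 (G : SimpleGraph V) {a0 a1 a2 a3 a4 : V} (h01 : G.Adj a0 a1) (h02 : G.Adj a0 a2)
    (h03 : G.Adj a0 a3) (h04 : G.Adj a0 a4) (h12 : G.Adj a1 a2) (h13 : G.Adj a1 a3)
    (h14 : G.Adj a1 a4) (h23 : G.Adj a2 a3) (h24 : G.Adj a2 a4) (h34 : G.Adj a3 a4) :
    ∀ i j, i ≠ j → G.Adj (![a0, a1, a2, a3, a4] i) (![a0, a1, a2, a3, a4] j) := by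
  have h01' := h01.symm; have h02' := h02.symm; have h03' := h03.symm
  have h04' := h04.symm; have h12' := h12.symm; have h13' := h13.symm
  have h14' := h14.symm; have h23' := h23.symm; have h24' := h24.symm
  have h34' := h34.symm
  intro i j hij
  fin_cases i <;> fin_cases j <;> simp_all

lemma aux_adj5' (G : SimpleGraph V) {a0 a1 a2 a3 a4 : V} (h02 : G.Adj a0 a2)
    (h03 : G.Adj a0 a3) (h04 : G.Adj a0 a4) (h12 : G.Adj a1 a2) (h13 : G.Adj a1 a3)
    (h14 : G.Adj a1 a4) (h23 : G.Adj a2 a3) (h24 : G.Adj a2 a4) (h34 : G.Adj a3 a4) :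
    ∀ i j : Fin 5, i ≠ j → ¬(i = 0 ∧ j = 1) → ¬(i = 1 ∧ j = 0) →
      G.Adj (![a0, a1, a2, a3, a4] i) (![a0, a1, a2, a3, a4] j) := by
  have h02' := h02.symm; have h03' := h03.symm
  have h04' := h04.symm; have h12' := h12.symm; have h13' := h13.symm
  have h14' := h14.symm; have h23' := h23.symm; have h24' := h24.symm
  have h34' := h34.symm
  intro i j hij hij1 hij2
  fin_cases i <;> fin_cases j <;> simp_all

lemma aux_clique_subdiv (G : SimpleGraph V) (b : Fin 5 → V) (hinj : Function.Injective b)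
    (hadj : ∀ i j, i ≠ j → G.Adj (b i) (b j)) : containsK5Subdivision G := by
  classical
  refine ⟨b, fun i j => if h : i = j then (Walk.nil.copy rfl (congrArg b h))
    else Walk.cons (hadj i j h) Walk.nil, hinj, ?_, ?_, ?_⟩
  · intro i j hij
    simp only [dif_neg hij]
    simp [Walk.isPath_def, hinj.ne hij]
  · intro i j hij k hk
    simp only [dif_neg hij] at hk
    simp only [Walk.support_cons, Walk.support_nil, List.mem_cons, List.mem_singleton,
      List.not_mem_nil, or_false] at hk
    rcases hk with hk | hk
    · exact Or.inl (hinj hk)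
    · exact Or.inr (hinj hk)
  · intro i j i' j' hij hij' _ x hx _
    simp only [dif_neg hij.ne] at hx
    simpa using hx

lemma aux_almost_clique_subdiv (G : SimpleGraph V) (b : Fin 5 → V) (w : V)
    (hinj : Function.Injective b) (hw : ∀ k, w ≠ b k)
    (h0w : G.Adj (b 0) w) (hw1 : G.Adj w (b 1))
    (hadj : ∀ i j : Fin 5, i ≠ j → ¬(i = 0 ∧ j = 1) → ¬(i = 1 ∧ j = 0) → G.Adj (b i) (b j)) :
    containsK5Subdivision G := by
  classical
  refine ⟨b, fun i j =>
    if h : i = j then (Walk.nil.copy rfl (congrArg b h))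
    else if h01 : i = 0 ∧ j = 1 then
      ((Walk.cons h0w (Walk.cons hw1 Walk.nil)).copy
        (congrArg b h01.1.symm) (congrArg b h01.2.symm))
    else if h10 : i = 1 ∧ j = 0 then
      ((Walk.cons h0w (Walk.cons hw1 Walk.nil)).reverse.copy
        (congrArg b h10.1.symm) (congrArg b h10.2.symm))
    else Walk.cons (hadj i j h h01 h10) Walk.nil, hinj, ?_, ?_, ?_⟩
  · intro i j hij
    by_cases h01 : i = 0 ∧ j = 1
    · obtain ⟨rfl, rfl⟩ := h01
      simp only [dif_neg hij, eq_self_iff_true, and_self, dite_true]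
      simp [Walk.isPath_def, (hw 0).symm, (hw 1).symm, hw 0, hw 1,
        hinj.ne (show (0 : Fin 5) ≠ 1 by decide)]
    · by_cases h10 : i = 1 ∧ j = 0
      · obtain ⟨rfl, rfl⟩ := h10
        simp only [dif_neg hij, dif_neg h01, eq_self_iff_true, and_self, dite_true]
        simp [Walk.isPath_def, Walk.support_reverse, (hw 0).symm, (hw 1).symm, hw 0, hw 1,
          hinj.ne (show (0 : Fin 5) ≠ 1 by decide), hinj.ne (show (1 : Fin 5) ≠ 0 by decide)]
      · simp only [dif_neg hij, dif_neg h01, dif_neg h10]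
        simp [Walk.isPath_def, hinj.ne hij]
  · intro i j hij k hk
    by_cases h01 : i = 0 ∧ j = 1
    · obtain ⟨rfl, rfl⟩ := h01
      simp only [dif_neg hij, eq_self_iff_true, and_self, dite_true,
        Walk.support_copy, Walk.support_cons, Walk.support_nil, List.mem_cons,
        List.not_mem_nil, or_false, List.mem_singleton] at hk
      rcases hk with hk | hk | hk
      · exact Or.inl (hinj hk)
      · exact absurd hk.symm (hw k)
      · exact Or.inr (hinj hk)
    · by_cases h10 : i = 1 ∧ j = 0
      · obtain ⟨rfl, rfl⟩ := h10
        simp only [dif_neg hij, dif_neg h01, eq_self_iff_true, and_self, dite_true,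
          Walk.support_copy, Walk.support_reverse, Walk.support_cons, Walk.support_nil,
          List.reverse_cons, List.mem_append, List.mem_cons, List.mem_singleton,
          List.not_mem_nil, or_false, false_or, List.mem_reverse] at hk
        rcases hk with ((hk | hk) | hk)
        · exact Or.inl (hinj hk)
        · exact absurd hk.symm (hw k)
        · exact Or.inr (hinj hk)
      · simp only [dif_neg hij, dif_neg h01, dif_neg h10, Walk.support_cons,
          Walk.support_nil, List.mem_cons, List.mem_singleton, List.not_mem_nil,
          or_false] at hk
        rcases hk with hk | hk
        · exact Or.inl (hinj hk)
        · exact Or.inr (hinj hk)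
  · intro i j i' j' hij hij' hne x hx hx'
    have hij0 : i ≠ j := hij.ne
    have hij0' : i' ≠ j' := hij'.ne
    by_cases h01 : i = 0 ∧ j = 1
    · obtain ⟨rfl, rfl⟩ := h01
      simp only [dif_neg hij0, eq_self_iff_true, and_self, dite_true,
        Walk.support_copy, Walk.support_cons, Walk.support_nil, List.mem_cons,
        List.not_mem_nil, or_false, List.mem_singleton] at hx
      rcases hx with hx | hx | hx
      · exact Or.inl hx
      · subst hx
        have h01' : ¬(i' = 0 ∧ j' = 1) := by
          rintro ⟨rfl, rfl⟩; exact hne rfl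
        have h10' : ¬(i' = 1 ∧ j' = 0) := by
          rintro ⟨rfl, rfl⟩; exact absurd hij' (by decide)
        simp only [dif_neg hij0', dif_neg h01', dif_neg h10', Walk.support_cons,
          Walk.support_nil, List.mem_cons, List.mem_singleton, List.not_mem_nil,
          or_false] at hx'
        rcases hx' with hx' | hx'
        · exact absurd hx' (hw i')
        · exact absurd hx' (hw j')
      · exact Or.inr hx
    · have h10 : ¬(i = 1 ∧ j = 0) := by
        rintro ⟨rfl, rfl⟩; exact absurd hij (by decide)
      simp only [dif_neg hij0, dif_neg h01, dif_neg h10, Walk.support_cons,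
        Walk.support_nil, List.mem_cons, List.mem_singleton, List.not_mem_nil,
        or_false] at hx
      exact hx

/-- A graph on `7` vertices in which every vertex has at most one non-neighbour
contains a subdivision of `K₅`. -/
lemma aux_seven_subdiv [Fintype V] (G : SimpleGraph V) (hcard : Fintype.card V = 7)
    (hmatch : ∀ x y z : V, y ≠ x → z ≠ x → ¬G.Adj x y → ¬G.Adj x z → y = z) :
    containsK5Subdivision G := by
  classical
  obtain ⟨nn, hnn⟩ : ∃ nn : V → V, ∀ x z : V, z ≠ x → z ≠ nn x → G.Adj x z := by
    refine ⟨fun x => if h : ∃ y, y ≠ x ∧ ¬G.Adj x y then h.choose else x, ?_⟩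
    intro x z hzx hznn
    by_contra hna
    have hex : ∃ y, y ≠ x ∧ ¬G.Adj x y := ⟨z, hzx, hna⟩
    have hspec := hex.choose_spec
    have hz : z = hex.choose := (hmatch x hex.choose z hspec.1 hzx hspec.2 hna).symm
    apply hznn
    simp only [dif_pos hex]
    exact hz
  have hpick : ∀ F : Finset V, F.card ≤ 6 → ∃ y, y ∉ F := by
    intro F hF
    by_contra h
    push_neg at h
    have hsub : Finset.univ ⊆ F := fun t _ => h t
    have := Finset.card_le_card hsub
    rw [Finset.card_univ, hcard] at this
    omega
  have hnev : Nonempty V := Fintype.card_pos_iff.mp (by omega)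
  obtain ⟨b0⟩ := hnev
  obtain ⟨b1, hb1⟩ := hpick {b0, nn b0} (by
    have := Finset.card_insert_le b0 ({nn b0} : Finset V)
    simp at this ⊢; omega)
  obtain ⟨b2, hb2⟩ := hpick {b0, nn b0, b1, nn b1} (by
    have h1 := Finset.card_insert_le b0 ({nn b0, b1, nn b1} : Finset V)
    have h2 := Finset.card_insert_le (nn b0) ({b1, nn b1} : Finset V)
    have h3 := Finset.card_insert_le b1 ({nn b1} : Finset V)
    simp at h3; omega)
  obtain ⟨b3, hb3⟩ := hpick {b0, nn b0, b1, nn b1, b2, nn b2} (by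
    have h1 := Finset.card_insert_le b0 ({nn b0, b1, nn b1, b2, nn b2} : Finset V)
    have h2 := Finset.card_insert_le (nn b0) ({b1, nn b1, b2, nn b2} : Finset V)
    have h3 := Finset.card_insert_le b1 ({nn b1, b2, nn b2} : Finset V)
    have h4 := Finset.card_insert_le (nn b1) ({b2, nn b2} : Finset V)
    have h5 := Finset.card_insert_le b2 ({nn b2} : Finset V)
    simp at h5; omega)
  simp only [Finset.mem_insert, Finset.mem_singleton, not_or] at hb1 hb2 hb3
  have hne10 : b1 ≠ b0 := hb1.1
  have hne20 : b2 ≠ b0 := hb2.1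
  have hne21 : b2 ≠ b1 := hb2.2.2.1
  have hne30 : b3 ≠ b0 := hb3.1
  have hne31 : b3 ≠ b1 := hb3.2.2.1
  have hne32 : b3 ≠ b2 := hb3.2.2.2.2.1
  have h01 : G.Adj b0 b1 := hnn b0 b1 hb1.1 hb1.2
  have h02 : G.Adj b0 b2 := hnn b0 b2 hb2.1 hb2.2.1
  have h12 : G.Adj b1 b2 := hnn b1 b2 hb2.2.2.1 hb2.2.2.2
  have h03 : G.Adj b0 b3 := hnn b0 b3 hb3.1 hb3.2.1
  have h13 : G.Adj b1 b3 := hnn b1 b3 hb3.2.2.1 hb3.2.2.2.1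
  have h23 : G.Adj b2 b3 := hnn b2 b3 hb3.2.2.2.2.1 hb3.2.2.2.2.2
  by_cases hex : ∃ t, t ∉ ({b0, b1, b2, b3} : Finset V) ∧
      ∀ s ∈ ({b0, b1, b2, b3} : Finset V), G.Adj s t
  · obtain ⟨t, htm, hta⟩ := hex
    simp only [Finset.mem_insert, Finset.mem_singleton, not_or] at htm
    have a0 : G.Adj b0 t := hta b0 (by simp)
    have a1 : G.Adj b1 t := hta b1 (by simp)
    have a2 : G.Adj b2 t := hta b2 (by simp)
    have a3 : G.Adj b3 t := hta b3 (by simp)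
    exact aux_clique_subdiv G ![b0, b1, b2, b3, t]
      (aux_inj5 hne10.symm hne20.symm hne30.symm (Ne.symm htm.1) hne21.symm hne31.symm
        (Ne.symm htm.2.1) hne32.symm (Ne.symm htm.2.2.1) (Ne.symm htm.2.2.2))
      (aux_adj5 G h01 h02 h03 a0 h12 h13 a1 h23 a2 a3)
  · push_neg at hex
    obtain ⟨x, hx⟩ := hpick {b0, b1, b2, b3} (by
      have h1 := Finset.card_insert_le b0 ({b1, b2, b3} : Finset V)
      have h2 := Finset.card_insert_le b1 ({b2, b3} : Finset V)
      have h3 := Finset.card_insert_le b2 ({b3} : Finset V)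
      simp at h3; omega)
    obtain ⟨y, hy⟩ := hpick {b0, b1, b2, b3, x} (by
      have h1 := Finset.card_insert_le b0 ({b1, b2, b3, x} : Finset V)
      have h2 := Finset.card_insert_le b1 ({b2, b3, x} : Finset V)
      have h3 := Finset.card_insert_le b2 ({b3, x} : Finset V)
      have h4 := Finset.card_insert_le b3 ({x} : Finset V)
      simp at h4; omega)
    obtain ⟨z, hz⟩ := hpick {b0, b1, b2, b3, x, y} (by
      have h1 := Finset.card_insert_le b0 ({b1, b2, b3, x, y} : Finset V)
      have h2 := Finset.card_insert_le b1 ({b2, b3, x, y} : Finset V)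
      have h3 := Finset.card_insert_le b2 ({b3, x, y} : Finset V)
      have h4 := Finset.card_insert_le b3 ({x, y} : Finset V)
      have h5 := Finset.card_insert_le x ({y} : Finset V)
      simp at h5; omega)
    have hyx : y ≠ x := by
      simp only [Finset.mem_insert, Finset.mem_singleton, not_or] at hy; exact hy.2.2.2.2
    have hzx : z ≠ x := by
      simp only [Finset.mem_insert, Finset.mem_singleton, not_or] at hz; exact hz.2.2.2.2.1
    have hzy : z ≠ y := by
      simp only [Finset.mem_insert, Finset.mem_singleton, not_or] at hz; exact hz.2.2.2.2.2
    have hy' : y ∉ ({b0, b1, b2, b3} : Finset V) := by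
      simp only [Finset.mem_insert, Finset.mem_singleton, not_or] at hy ⊢
      exact ⟨hy.1, hy.2.1, hy.2.2.1, hy.2.2.2.1⟩
    have hz' : z ∉ ({b0, b1, b2, b3} : Finset V) := by
      simp only [Finset.mem_insert, Finset.mem_singleton, not_or] at hz ⊢
      exact ⟨hz.1, hz.2.1, hz.2.2.1, hz.2.2.2.1⟩
    obtain ⟨p, hpB, hpx⟩ := hex x hx
    obtain ⟨q, hqB, hqy⟩ := hex y hy'
    obtain ⟨r, hrB, hrz⟩ := hex z hz'
    have hxp : x ≠ p := fun h => hx (h ▸ hpB)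
    have hyq : y ≠ q := fun h => hy' (h ▸ hqB)
    have hzr : z ≠ r := fun h => hz' (h ▸ hrB)
    have hxq : x ≠ q := fun h => hx (h ▸ hqB)
    have hyp : y ≠ p := fun h => hy' (h ▸ hpB)
    have hzp : z ≠ p := fun h => hz' (h ▸ hpB)
    have hzq : z ≠ q := fun h => hz' (h ▸ hqB)
    have hpq : p ≠ q := by
      intro h; subst h
      exact hyx (hmatch p x y hxp hyp hpx hqy).symm
    have hqr : q ≠ r := by
      intro h; subst h
      exact hzy (hmatch q y z hyq hzq hqy hrz).symm
    have hpr : p ≠ r := by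
      intro h; subst h
      exact hzx (hmatch p x z hxp hzp hpx hrz).symm
    have hsub : ({p, q, r} : Finset V) ⊆ {b0, b1, b2, b3} := by
      intro a ha
      simp only [Finset.mem_insert, Finset.mem_singleton] at ha
      rcases ha with rfl | rfl | rfl <;> assumption
    have hcard3 : ({p, q, r} : Finset V).card = 3 := by
      rw [Finset.card_insert_of_notMem (by simp [hpq, hpr]),
        Finset.card_insert_of_notMem (by simp [hqr]), Finset.card_singleton]
    have hcard4 : ({b0, b1, b2, b3} : Finset V).card = 4 := by
      rw [Finset.card_insert_of_notMem (by simp [hne10.symm, hne20.symm, hne30.symm]),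
        Finset.card_insert_of_notMem (by simp [hne21.symm, hne31.symm]),
        Finset.card_insert_of_notMem (by simp [hne32.symm]), Finset.card_singleton]
    have hcards : (({b0, b1, b2, b3} : Finset V) \ {p, q, r}).card = 1 := by
      rw [Finset.card_sdiff_of_subset hsub, hcard3, hcard4]
    obtain ⟨s, hs⟩ := Finset.card_pos.mp
      (by omega : 0 < (({b0, b1, b2, b3} : Finset V) \ {p, q, r}).card)
    have hsB : s ∈ ({b0, b1, b2, b3} : Finset V) := (Finset.mem_sdiff.mp hs).1
    have hsnot := (Finset.mem_sdiff.mp hs).2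
    simp only [Finset.mem_insert, Finset.mem_singleton, not_or] at hsnot
    have hsp : s ≠ p := hsnot.1
    have hsq : s ≠ q := hsnot.2.1
    have hsr : s ≠ r := hsnot.2.2
    have hxs : x ≠ s := fun h => hx (h ▸ hsB)
    have hys : y ≠ s := fun h => hy' (h ▸ hsB)
    have hzs : z ≠ s := fun h => hz' (h ▸ hsB)
    have nAxp : ¬G.Adj x p := fun h => hpx h.symm
    have nAyq : ¬G.Adj y q := fun h => hqy h.symm
    have nAzr : ¬G.Adj z r := fun h => hrz h.symm
    have Axy : G.Adj x y := by
      by_contra h; exact hyp (hmatch x p y hxp.symm hyx nAxp h).symm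
    have Axz : G.Adj x z := by
      by_contra h; exact hzp (hmatch x p z hxp.symm hzx nAxp h).symm
    have Axs : G.Adj x s := by
      by_contra h; exact hsp (hmatch x p s hxp.symm hxs.symm nAxp h).symm
    have Apy : G.Adj p y := by
      by_contra h; exact hyx (hmatch p x y hxp hyp hpx h).symm
    have Apz : G.Adj p z := by
      by_contra h; exact hzx (hmatch p x z hxp hzp hpx h).symm
    have Aps : G.Adj p s := by
      by_contra h; exact hxs (hmatch p x s hxp hsp hpx h)
    have Ayz : G.Adj y z := by
      by_contra h; exact hzq (hmatch y q z hyq.symm hzy nAyq h).symm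
    have Ays : G.Adj y s := by
      by_contra h; exact hsq (hmatch y q s hyq.symm hys.symm nAyq h).symm
    have Azs : G.Adj z s := by
      by_contra h; exact hsr (hmatch z r s hzr.symm hzs.symm nAzr h).symm
    have Axq : G.Adj x q := by
      by_contra h; exact hpq (hmatch x p q hxp.symm hxq.symm nAxp h)
    have Aqp : G.Adj q p := by
      by_contra h; exact hyp (hmatch q y p hyq hpq hqy h)
    refine aux_almost_clique_subdiv G ![x, p, y, z, s] q
      (aux_inj5 hxp hyx.symm hzx.symm hxs hyp.symm hzp.symm (Ne.symm hsp) hzy.symm hys hzs)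
      ?_ Axq Aqp
      (aux_adj5' G Axy Axz Axs Apy Apz Aps Ayz Ays Azs)
    intro k
    fin_cases k
    · exact hxq.symm
    · exact hpq.symm
    · exact hyq.symm
    · exact hzq.symm
    · exact hsq.symm

/-- If both 4-hammocks of `G - v` with boundary `N(u)` are
degenerate (for a 4-valent `u`), then `G` has exactly 7 vertices and contains
a subdivision of `K₅`. -/
theorem stmt14 {V : Type*} [Fintype V] (G : SimpleGraph V)
    (h5 : IsKConnected 5 G) (v : V) (u : ({v}ᶜ : Set V))
    (hdeg : ((G.induce ({v}ᶜ : Set V)).neighborSet u).ncard = 4)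
    (H₁ H₂ : (G.induce ({v}ᶜ : Set V)).Subgraph)
    (hH₁ : IsHammock (G.induce ({v}ᶜ : Set V)) 4 H₁)
    (hH₂ : IsHammock (G.induce ({v}ᶜ : Set V)) 4 H₂)
    (hb₁ : bnd (G.induce ({v}ᶜ : Set V)) H₁ = (G.induce ({v}ᶜ : Set V)).neighborSet u)
    (hb₂ : bnd (G.induce ({v}ᶜ : Set V)) H₂ = (G.induce ({v}ᶜ : Set V)).neighborSet u)
    (hv₁ : H₁.verts = insert u ((G.induce ({v}ᶜ : Set V)).neighborSet u))
    (hv₂ : H₂.verts = Set.univ \ {u})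
    (hd₁ : DegenerateHammock (G.induce ({v}ᶜ : Set V)) H₁)
    (hd₂ : DegenerateHammock (G.induce ({v}ᶜ : Set V)) H₂) :
    Fintype.card V = 7 ∧ containsK5Subdivision G := by
  classical
  -- Part 1: `G` has exactly 7 vertices
  have hbnd : (bnd (G.induce ({v}ᶜ : Set V)) H₂).ncard = 4 := by
    have h := hH₂; unfold IsHammock at h; exact h.2
  have h5v : H₂.verts.ncard = 5 := by
    have h := hd₂
    unfold DegenerateHammock at h
    rw [hbnd] at h
    exact h
  rw [hv₂, ← Set.compl_eq_univ_diff] at h5v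
  have h2 := Set.ncard_add_ncard_compl ({u} : Set ↥({v}ᶜ : Set V))
  rw [Set.ncard_singleton, h5v] at h2
  have h3 : Nat.card ↥({v}ᶜ : Set V) = ({v}ᶜ : Set V).ncard := Nat.card_coe_set_eq _
  have h4 := Set.ncard_add_ncard_compl ({v} : Set V)
  rw [Set.ncard_singleton] at h4
  have h6 : Nat.card V = Fintype.card V := Nat.card_eq_fintype_card
  have hcardV : Fintype.card V = 7 := by omega
  refine ⟨hcardV, ?_⟩
  -- Part 2: a `K₅`-subdivision
  apply aux_seven_subdiv G hcardV
  intro x y z hyx hzx hnxy hnxz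
  by_contra hyz
  have h3set : ({x, y, z} : Set V).ncard = 3 := by
    rw [Set.ncard_eq_three]
    exact ⟨x, y, z, Ne.symm hyx, Ne.symm hzx, hyz, rfl⟩
  have hc := Set.ncard_add_ncard_compl ({x, y, z} : Set V)
  rw [h3set] at hc
  have hcompl : (({x, y, z} : Set V)ᶜ).ncard < 5 := by
    have h7 : Nat.card V = Fintype.card V := Nat.card_eq_fintype_card
    omega
  have hconn := h5.2 (({x, y, z} : Set V)ᶜ) (Set.toFinite _) hcompl
  rw [compl_compl] at hconn
  have hxm : x ∈ ({x, y, z} : Set V) := by simp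
  have hym : y ∈ ({x, y, z} : Set V) := by simp
  obtain ⟨pw⟩ := hconn.preconnected ⟨x, hxm⟩ ⟨y, hym⟩
  have hne' : (⟨x, hxm⟩ : ↥({x, y, z} : Set V)) ≠ ⟨y, hym⟩ :=
    fun h => (Ne.symm hyx) (congrArg Subtype.val h)
  have hnnil : ¬ pw.Nil := SimpleGraph.Walk.not_nil_of_ne (p := pw) hne'
  have hadj1 := SimpleGraph.Walk.adj_snd (p := pw) hnnil
  have hGadj : G.Adj x ((pw.getVert 1) : V) := by
    simpa using hadj1
  have hmem := (pw.getVert 1).2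
  simp only [Set.mem_insert_iff, Set.mem_singleton_iff] at hmem
  rcases hmem with hm | hm | hm
  · rw [hm] at hGadj; exact G.loopless.irrefl x hGadj
  · rw [hm] at hGadj; exact hnxy hGadj
  · rw [hm] at hGadj; exact hnxz hGadj
end
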